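/- arXiv:1612.06654 — 3 statements merged into one kernel-verified Lean document; each statement's English description precedes it below -/
import Mathlib

section
/- With the setup of the explicit ODE solution (U convex decreasing C² vanishing at infinity, V the solution of (σ²/2)V'' + μV' − (λ+δ)V + λU = 0 with V'(b) = −1 and V(∞) = 0), one has V(b) = (1/A)(1 + (2λ/σ²)∫_b^∞ U(y) e^{Ã(b−y)} dy); in particular V(x) > 0 for all x ≥ b. -/
open Filter Set
open MeasureTheory

-- auxiliary: a function whose derivative is eventually ≥ 1 cannot tend to 0
lemma no_blowup (V V' : ℝ → ℝ) (hd : ∀ x ∈ Ici (0:ℝ), HasDerivAt V (V' x) x)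
    (hV : Tendsto V atTop (nhds 0)) (h : ∀ᶠ x in atTop, 1 ≤ V' x) : False := by
  obtain ⟨M₀, hM⟩ := h.exists_forall_of_atTop
  set M := max M₀ 0 with hMdef
  have hM0 : (0:ℝ) ≤ M := le_max_right _ _
  have hmono : MonotoneOn (fun x => V x - x) (Ici M) := by
    apply monotoneOn_of_deriv_nonneg (convex_Ici M)
    · intro x hx
      exact ((hd x (le_trans hM0 hx)).sub (hasDerivAt_id' (x := x))).continuousAt.continuousWithinAt
    · intro x hx
      rw [interior_Ici] at hx
      exact ((hd x (le_trans hM0 hx.le)).sub (hasDerivAt_id' (x := x))).differentiableAt.differentiableWithinAt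
    · intro x hx
      rw [interior_Ici] at hx
      rw [show (fun x => V x - x) = (V - fun x => x) from rfl, ((hd x (le_trans hM0 hx.le)).sub (hasDerivAt_id' (x := x))).deriv]
      have := hM x (le_trans (le_max_left _ _) hx.le)
      linarith
  have hgrow : ∀ x ≥ M, V M + (x - M) ≤ V x := by
    intro x hx
    have := hmono (self_mem_Ici) hx hx
    simp only at this
    linarith
  have htop : Tendsto V atTop atTop := by
    apply tendsto_atTop_mono' _ _ (tendsto_atTop_add_const_left atTop (V M - M) tendsto_id)
    filter_upwards [eventually_ge_atTop M] with x hx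
    have := hgrow x hx
    simp only [id]
    linarith
  exact not_tendsto_nhds_of_tendsto_atTop htop 0 hV

set_option maxHeartbeats 1000000 in
theorem boundary_value_and_positivity
    (σ μ lam δ b : ℝ) (hσ : 0 < σ) (hμ : 0 < μ) (hlam : 0 < lam) (hδ : -lam < δ)
    (hb : 0 ≤ b)
    (U : ℝ → ℝ)
    (hUpos : ∀ x ∈ Ici (0 : ℝ), 0 ≤ U x)
    (hUconv : ConvexOn ℝ (Ici (0 : ℝ)) U)
    (hUdec : AntitoneOn U (Ici (0 : ℝ)))
    (hUC2 : ContDiffOn ℝ 2 U (Ici (0 : ℝ)))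
    (hUlim : Tendsto U atTop (nhds 0))
    (ψ A At : ℝ)
    (hψ : ψ = Real.sqrt (μ ^ 2 + 2 * σ ^ 2 * (δ + lam)))
    (hA : A = (μ + ψ) / σ ^ 2)
    (hAt : At = (-μ + ψ) / σ ^ 2)
    (V V' V'' : ℝ → ℝ)
    (hd1 : ∀ x ∈ Ici (0 : ℝ), HasDerivAt V (V' x) x)
    (hd2 : ∀ x ∈ Ici (0 : ℝ), HasDerivAt V' (V'' x) x)
    (hcont : ContinuousOn V'' (Ici (0 : ℝ)))
    (hODE : ∀ x ∈ Ici (0 : ℝ),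
      σ ^ 2 / 2 * V'' x + μ * V' x - (lam + δ) * V x + lam * U x = 0)
    (hVb : V' b = -1)
    (hVlim : Tendsto V atTop (nhds 0)) :
    V b = (1 / A) * (1 + (2 * lam / σ ^ 2) *
        ∫ y in Ioi b, U y * Real.exp (At * (b - y))) ∧
    ∀ x, b ≤ x → 0 < V x := by
  have hσ2 : (0:ℝ) < σ ^ 2 := by positivity
  have harg : μ ^ 2 < μ ^ 2 + 2 * σ ^ 2 * (δ + lam) := by nlinarith
  have hψμ : μ < ψ := by
    rw [hψ]
    calc μ ≤ |μ| := le_abs_self μ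
    _ = Real.sqrt (μ ^ 2) := by rw [Real.sqrt_sq_eq_abs]
    _ < _ := Real.sqrt_lt_sqrt (by positivity) harg
  have hψneg : -μ < ψ := by nlinarith
  have hψ2 : ψ ^ 2 = μ ^ 2 + 2 * σ ^ 2 * (δ + lam) := by
    rw [hψ, Real.sq_sqrt (by nlinarith)]
  have hA0 : 0 < A := by rw [hA]; apply div_pos (by linarith) hσ2
  have hAt0 : 0 < At := by rw [hAt]; apply div_pos (by linarith) hσ2
  set c : ℝ := 2 * lam / σ ^ 2 with hc
  have hc0 : 0 < c := by positivity
  set f : ℝ → ℝ := fun y => U y * Real.exp (-At * y) with hf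
  have hUcont : ContinuousOn U (Ici 0) := hUC2.continuousOn
  set H : ℝ → ℝ := fun x => Real.exp (-At * x) * (V' x + A * V x) with hH
  -- derivative of H
  have hHder : ∀ y ∈ Ici (0:ℝ), HasDerivAt H (-(c * f y)) y := by
    intro y hy
    have hexp : HasDerivAt (fun x => Real.exp (-At * x)) (-At * Real.exp (-At * y)) y := by
      simpa [mul_comm] using ((hasDerivAt_id y).const_mul (-At)).exp
    have hsum : HasDerivAt (fun x => V' x + A * V x) (V'' y + A * V' y) y :=
      (hd2 y hy).add ((hd1 y hy).const_mul A)
    have := hexp.mul hsum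
    convert this using 1
    · rfl
    · rfl
    · rfl
    have ode := hODE y hy
    have hAAt : A * At = 2 * (lam + δ) / σ ^ 2 := by
      rw [hA, hAt]; field_simp; nlinarith [hψ2]
    have hAsub : A - At = 2 * μ / σ ^ 2 := by rw [hA, hAt]; ring
    have key : V'' y + (A - At) * V' y - (A * At) * V y = -(c * U y) := by
      rw [hAsub, hAAt, hc]
      field_simp
      linarith [ode]
    simp only [hf]
    nlinarith [key, Real.exp_pos (-At * y)]
  
  have hIciSub : Ioi b ⊆ Ici (0:ℝ) := fun y hy => le_trans hb (le_of_lt hy)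
  have hfcont : ContinuousOn f (Ici 0) :=
    hUcont.mul ((Real.continuous_exp.comp (continuous_const.mul continuous_id)).continuousOn)
  -- integral identity
  have hIdent : ∀ x, b ≤ x → H x = H b - c * ∫ y in b..x, f y := by
    intro x hx
    have hsub : Set.uIcc b x ⊆ Ici (0:ℝ) := by
      rw [uIcc_of_le hx]; exact fun y hy => le_trans hb hy.1
    have h1 : ∫ y in b..x, -(c * f y) = H x - H b := by
      apply intervalIntegral.integral_eq_sub_of_hasDerivAt
      · intro y hy
        exact hHder y (hsub hy)
      · apply ContinuousOn.intervalIntegrable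
        exact ((continuousOn_const.mul (hfcont.mono hsub)).neg)
    rw [intervalIntegral.integral_neg, intervalIntegral.integral_const_mul] at h1
    linarith
  -- integrability on Ioi b
  have hUb0 : 0 ≤ U b := hUpos b hb
  have hfnonneg : ∀ y ∈ Ioi b, 0 ≤ f y := fun y hy =>
    mul_nonneg (hUpos y (hIciSub hy)) (Real.exp_pos _).le
  have hgint : IntegrableOn (fun y => U b * Real.exp (-At * y)) (Ioi b) volume :=
    (exp_neg_integrableOn_Ioi b hAt0).const_mul (U b)
  have hmeas : MeasureTheory.AEStronglyMeasurable f (MeasureTheory.volume.restrict (Ioi b)) :=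
    (hfcont.mono hIciSub).aestronglyMeasurable measurableSet_Ioi
  have hfint : IntegrableOn f (Ioi b) volume := by
    apply MeasureTheory.Integrable.mono hgint hmeas
    rw [MeasureTheory.ae_restrict_iff' measurableSet_Ioi]
    filter_upwards with y hy
    rw [Real.norm_eq_abs, Real.norm_eq_abs, abs_of_nonneg (hfnonneg y hy),
      abs_of_nonneg (mul_nonneg hUb0 (Real.exp_pos _).le)]
    exact mul_le_mul_of_nonneg_right (hUdec hb (hIciSub hy) (le_of_lt hy)) (Real.exp_pos _).le
  have hIlim : Tendsto (fun x => ∫ y in b..x, f y) atTop (nhds (∫ y in Ioi b, f y)) :=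
    MeasureTheory.intervalIntegral_tendsto_integral_Ioi b hfint tendsto_id
  set J : ℝ := ∫ y in Ioi b, f y with hJdef
  have hJ0 : 0 ≤ J := MeasureTheory.setIntegral_nonneg measurableSet_Ioi hfnonneg
  set L : ℝ := H b - c * J with hLdef
  have hHlim : Tendsto H atTop (nhds L) := by
    have h2 : Tendsto (fun x => H b - c * ∫ y in b..x, f y) atTop (nhds L) :=
      tendsto_const_nhds.sub (hIlim.const_mul c)
    apply h2.congr'
    filter_upwards [eventually_ge_atTop b] with x hx
    exact (hIdent x hx).symm
  have hexp_top : Tendsto (fun x => Real.exp (At * x)) atTop atTop :=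
    Real.tendsto_exp_atTop.comp (Filter.Tendsto.const_mul_atTop hAt0 tendsto_id)
  have hbound : ∀ᶠ x in atTop, |A * V x| ≤ 1 := by
    have h := hVlim.const_mul A
    rw [mul_zero] at h
    filter_upwards [h (Metric.closedBall_mem_nhds 0 one_pos)] with x hx
    simp only [Set.mem_preimage, Metric.mem_closedBall, Real.dist_eq, sub_zero] at hx
    exact hx
  have hVeq : ∀ x, V' x + A * V x = Real.exp (At * x) * H x := by
    intro x
    have hee : Real.exp (At * x) * Real.exp (-At * x) = 1 := by
      rw [← Real.exp_add]; ring_nf; exact Real.exp_zero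
    simp only [hH]
    rw [← mul_assoc, hee, one_mul]
  -- L = 0
  have hL0 : L = 0 := by
    by_contra hne
    rcases lt_or_gt_of_ne hne with hneg | hpos
    · have hev : ∀ᶠ x in atTop, 1 ≤ -V' x := by
        filter_upwards [hHlim (Iio_mem_nhds (show L < L/2 / 1 by rw [div_one]; linarith)),
          hexp_top.eventually_ge_atTop (-4/L), hbound] with x h1 h2 h3
        simp only [Set.mem_preimage, mem_Iio, div_one] at h1
        have hEH : Real.exp (At * x) * H x ≤ -2 := by
          have e1 : Real.exp (At * x) * H x ≤ Real.exp (At * x) * (L/2) :=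
            mul_le_mul_of_nonneg_left (le_of_lt h1) (Real.exp_pos _).le
          have e2 : Real.exp (At * x) * (L/2) ≤ (-4/L) * (L/2) := by
            apply mul_le_mul_of_nonpos_right h2 (by linarith)
          have e3 : (-4/L) * (L/2) = -2 := by field_simp; ring
          linarith
        have h4 := abs_le.1 h3
        have := hVeq x
        linarith [this]
      exact no_blowup (fun x => -V x) (fun x => -V' x) (fun x hx => (hd1 x hx).neg)
        (by simpa using hVlim.neg) hev
    · have hev : ∀ᶠ x in atTop, 1 ≤ V' x := by
        filter_upwards [hHlim (Ioi_mem_nhds (show L/2 < L by linarith)),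
          hexp_top.eventually_ge_atTop (4/L), hbound] with x h1 h2 h3
        simp only [Set.mem_preimage, mem_Ioi] at h1
        have hEH : 2 ≤ Real.exp (At * x) * H x := by
          have e1 : Real.exp (At * x) * (L/2) ≤ Real.exp (At * x) * H x :=
            mul_le_mul_of_nonneg_left (le_of_lt h1) (Real.exp_pos _).le
          have e2 : (4/L) * (L/2) ≤ Real.exp (At * x) * (L/2) :=
            mul_le_mul_of_nonneg_right h2 (by linarith)
          have e3 : (4/L) * (L/2) = 2 := by field_simp; ring
          linarith
        have h4 := abs_le.1 h3
        have := hVeq x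
        linarith [this]
      exact no_blowup V V' hd1 hVlim hev
  have hHb : H b = c * J := by
    have : H b - c * J = 0 := hL0
    linarith
  -- H is nonnegative on [b, ∞)
  have hHnonneg : ∀ x, b ≤ x → 0 ≤ H x := by
    intro x hx
    have hIle : (∫ y in b..x, f y) ≤ J := by
      rw [intervalIntegral.integral_of_le hx]
      apply MeasureTheory.setIntegral_mono_set hfint
      · filter_upwards [ae_restrict_mem measurableSet_Ioi] with y hy
        exact hfnonneg y hy
      · exact HasSubset.Subset.eventuallyLE Ioc_subset_Ioi_self
    rw [hIdent x hx, hHb]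
    nlinarith
  -- the value V b
  have hJ' : (∫ y in Ioi b, U y * Real.exp (At * (b - y))) = Real.exp (At * b) * J := by
    have heq : ∀ y : ℝ, U y * Real.exp (At * (b - y)) = Real.exp (At * b) * f y := by
      intro y
      simp only [hf]
      rw [← mul_assoc, mul_comm (Real.exp (At * b)) (U y), mul_assoc, ← Real.exp_add]
      ring_nf
    simp only [heq]
    rw [MeasureTheory.integral_const_mul]
  have hVbval : A * V b = 1 + c * (Real.exp (At * b) * J) := by
    have h1 : Real.exp (-At * b) * (-1 + A * V b) = c * J := by
      have := hHb
      simp only [hH, hVb] at this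
      linarith [this]
    have h2 := congrArg (fun t => Real.exp (At * b) * t) h1
    have hee : Real.exp (At * b) * Real.exp (-At * b) = 1 := by
      rw [← Real.exp_add]; ring_nf; exact Real.exp_zero
    rw [← mul_assoc, hee, one_mul] at h2
    linear_combination h2
  have hVbpos : 0 < V b := by
    have hterm : 0 ≤ c * (Real.exp (At * b) * J) := by positivity
    nlinarith
  constructor
  · rw [hJ', ← hVbval]
    field_simp
  · -- positivity for all x ≥ b
    have hGmono : MonotoneOn (fun x => Real.exp (A * x) * V x) (Ici b) := by
      apply monotoneOn_of_deriv_nonneg (convex_Ici b)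
      · intro x hx
        have hD : HasDerivAt (fun x => Real.exp (A * x) * V x)
            (A * Real.exp (A * x) * V x + Real.exp (A * x) * V' x) x := by
          have he : HasDerivAt (fun x => Real.exp (A * x)) (A * Real.exp (A * x)) x := by
            simpa [mul_comm] using ((hasDerivAt_id' (x := x)).const_mul A).exp
          exact he.mul (hd1 x (le_trans hb hx))
        exact hD.continuousAt.continuousWithinAt
      · intro x hx
        rw [interior_Ici] at hx
        have he : HasDerivAt (fun x => Real.exp (A * x)) (A * Real.exp (A * x)) x := by
          simpa [mul_comm] using ((hasDerivAt_id' (x := x)).const_mul A).exp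
        exact (he.mul (hd1 x (le_trans hb hx.le))).differentiableAt.differentiableWithinAt
      · intro x hx
        rw [interior_Ici] at hx
        have he : HasDerivAt (fun x => Real.exp (A * x)) (A * Real.exp (A * x)) x := by
          simpa [mul_comm] using ((hasDerivAt_id' (x := x)).const_mul A).exp
        rw [show (fun x => Real.exp (A * x) * V x) = ((fun x => Real.exp (A * x)) * V) from rfl, (he.mul (hd1 x (le_trans hb hx.le))).deriv]
        have h1 : A * Real.exp (A * x) * V x + Real.exp (A * x) * V' x
            = Real.exp (A * x) * (V' x + A * V x) := by ring
        rw [h1, hVeq x]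
        have := hHnonneg x hx.le
        positivity
    intro x hx
    have h1 := hGmono (self_mem_Ici) hx hx
    simp only at h1
    have h2 : 0 < Real.exp (A * b) * V b := by positivity
    nlinarith [Real.exp_pos (A * x), h1, h2]
end

section
/- Comparison principle: let v, w : [0,∞) → ℝ be C² solutions of (σ²/2)v'' + μv' − cv + h₁ = 0 and (σ²/2)w'' + μw' − cw + h₂ = 0 on [0,∞) with c > 0, h₂ ≥ h₁ ≥ 0 continuous, v'(0) = w'(0) = −1, w(0) > v(0), and v(x), w(x) → 0 as x → ∞. Then w(x) > v(x) for all x ≥ 0. -/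
open Filter Set

set_option maxHeartbeats 1000000 in
theorem comparison_principle
    (σ μ c : ℝ) (hσ : 0 < σ) (hμ : 0 < μ) (hc : 0 < c)
    (h₁ h₂ : ℝ → ℝ)
    (hh₁ : ContinuousOn h₁ (Ici (0 : ℝ))) (hh₂ : ContinuousOn h₂ (Ici (0 : ℝ)))
    (hord : ∀ x ∈ Ici (0 : ℝ), 0 ≤ h₁ x ∧ h₁ x ≤ h₂ x)
    (v v' v'' w w' w'' : ℝ → ℝ)
    (hvd1 : ∀ x ∈ Ici (0 : ℝ), HasDerivAt v (v' x) x)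
    (hvd2 : ∀ x ∈ Ici (0 : ℝ), HasDerivAt v' (v'' x) x)
    (hwd1 : ∀ x ∈ Ici (0 : ℝ), HasDerivAt w (w' x) x)
    (hwd2 : ∀ x ∈ Ici (0 : ℝ), HasDerivAt w' (w'' x) x)
    (hvc : ContinuousOn v'' (Ici (0 : ℝ))) (hwc : ContinuousOn w'' (Ici (0 : ℝ)))
    (hvODE : ∀ x ∈ Ici (0 : ℝ), σ ^ 2 / 2 * v'' x + μ * v' x - c * v x + h₁ x = 0)
    (hwODE : ∀ x ∈ Ici (0 : ℝ), σ ^ 2 / 2 * w'' x + μ * w' x - c * w x + h₂ x = 0)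
    (hv0 : v' 0 = -1) (hw0 : w' 0 = -1) (hgt : v 0 < w 0)
    (hvlim : Tendsto v atTop (nhds 0)) (hwlim : Tendsto w atTop (nhds 0)) :
    ∀ x ∈ Ici (0 : ℝ), v x < w x := by
  have hσ2 : (0:ℝ) < σ ^ 2 := by positivity
  set a : ℝ := σ ^ 2 / 2 with ha_def
  have ha : 0 < a := by positivity
  set D : ℝ := Real.sqrt (μ ^ 2 + 2 * c * σ ^ 2) with hD_def
  have hD2 : D ^ 2 = μ ^ 2 + 2 * c * σ ^ 2 := Real.sq_sqrt (by positivity)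
  have hDpos : μ < D := by nlinarith [Real.sqrt_nonneg (μ ^ 2 + 2 * c * σ ^ 2)]
  set r : ℝ := (-μ + D) / σ ^ 2 with hr_def
  set s : ℝ := (-μ - D) / σ ^ 2 with hs_def
  have hrpos : 0 < r := by
    rw [hr_def]; apply div_pos (by linarith) hσ2
  have hsum : a * (r + s) = -μ := by
    rw [ha_def, hr_def, hs_def]; field_simp; ring
  have hprod : a * (r * s) = -c := by
    rw [ha_def, hr_def, hs_def]; field_simp; nlinarith [hD2]
  -- the difference u = w - v, its combination q = u' - r u
  set q : ℝ → ℝ := fun x => (w' x - v' x) - r * (w x - v x) with hq_def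
  have hqd : ∀ x ∈ Ici (0:ℝ), HasDerivAt q ((w'' x - v'' x) - r * (w' x - v' x)) x := by
    intro x hx
    exact ((hwd2 x hx).sub (hvd2 x hx)).sub (((hwd1 x hx).sub (hvd1 x hx)).const_mul r)
  have hODEu : ∀ x ∈ Ici (0:ℝ),
      a * (w'' x - v'' x) + μ * (w' x - v' x) - c * (w x - v x) = h₁ x - h₂ x := by
    intro x hx
    have h1 := hvODE x hx
    have h2 := hwODE x hx
    linarith
  have hkey : ∀ x ∈ Ici (0:ℝ),
      ((w'' x - v'' x) - r * (w' x - v' x)) - s * q x ≤ 0 := by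
    intro x hx
    have h1 := hODEu x hx
    have h2 := (hord x hx).2
    have h3 : a * (((w'' x - v'' x) - r * (w' x - v' x)) - s * q x)
        = a * (w'' x - v'' x) + μ * (w' x - v' x) - c * (w x - v x) := by
      rw [hq_def]
      have e1 : a * (((w'' x - v'' x) - r * (w' x - v' x)) -
          s * ((w' x - v' x) - r * (w x - v x)))
          = a * (w'' x - v'' x) - (a * (r + s)) * (w' x - v' x)
            + (a * (r * s)) * (w x - v x) := by ring
      rw [e1, hsum, hprod]; ring
    nlinarith [h3]
  -- F = exp(-s x) * q x is antitone on Ici 0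
  set F : ℝ → ℝ := fun x => Real.exp (-s * x) * q x with hF_def
  have hFd : ∀ x ∈ Ici (0:ℝ),
      HasDerivAt F (Real.exp (-s * x) * (((w'' x - v'' x) - r * (w' x - v' x)) - s * q x)) x := by
    intro x hx
    have he : HasDerivAt (fun y => Real.exp (-s * y)) (Real.exp (-s * x) * (-s)) x := by
      simpa using ((hasDerivAt_id x).const_mul (-s)).exp
    have := he.mul (hqd x hx)
    refine this.congr_deriv ?_
    ring
  have hFanti : AntitoneOn F (Ici (0:ℝ)) := by
    apply antitoneOn_of_deriv_nonpos (convex_Ici 0)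
    · intro x hx
      exact (hFd x hx).continuousAt.continuousWithinAt
    · intro x hx
      rw [interior_Ici] at hx
      exact (hFd x (Set.mem_Ici.mpr (le_of_lt (Set.mem_Ioi.mp hx)))).differentiableAt.differentiableWithinAt
    · intro x hx
      rw [interior_Ici] at hx
      rw [(hFd x (Set.mem_Ici.mpr (le_of_lt (Set.mem_Ioi.mp hx)))).deriv]
      have := hkey x (Set.mem_Ici.mpr (le_of_lt (Set.mem_Ioi.mp hx)))
      have he := Real.exp_pos (-s * x)
      nlinarith
  have hq0 : q 0 < 0 := by
    rw [hq_def]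
    simp only [hv0, hw0]
    nlinarith
  have hqneg : ∀ x ∈ Ici (0:ℝ), q x < 0 := by
    intro x hx
    have h1 : F x ≤ F 0 := hFanti (le_refl (0:ℝ)) hx hx
    have h2 : F 0 = q 0 := by rw [hF_def]; simp
    have he := Real.exp_pos (-s * x)
    rw [hF_def] at h1
    simp only [mul_zero, neg_zero, Real.exp_zero, one_mul] at h1
    nlinarith [h1, hq0]
  -- G = exp(-r x) * (w - v) is strictly antitone, tends to 0, hence positive
  set G : ℝ → ℝ := fun x => Real.exp (-r * x) * (w x - v x) with hG_def
  have hGd : ∀ x ∈ Ici (0:ℝ), HasDerivAt G (Real.exp (-r * x) * q x) x := by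
    intro x hx
    have he : HasDerivAt (fun y => Real.exp (-r * y)) (Real.exp (-r * x) * (-r)) x := by
      simpa using ((hasDerivAt_id x).const_mul (-r)).exp
    have := he.mul ((hwd1 x hx).sub (hvd1 x hx))
    refine this.congr_deriv ?_
    rw [hq_def]; simp only [Pi.sub_apply]; ring
  have hGanti : StrictAntiOn G (Ici (0:ℝ)) := by
    apply strictAntiOn_of_deriv_neg (convex_Ici 0)
    · intro x hx
      exact (hGd x hx).continuousAt.continuousWithinAt
    · intro x hx
      rw [interior_Ici] at hx
      rw [(hGd x (Set.mem_Ici.mpr (le_of_lt (Set.mem_Ioi.mp hx)))).deriv]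
      exact mul_neg_of_pos_of_neg (Real.exp_pos _) (hqneg x (Set.mem_Ici.mpr (le_of_lt (Set.mem_Ioi.mp hx))))
  have hGlim : Tendsto G atTop (nhds 0) := by
    have h1 : Tendsto (fun x : ℝ => -r * x) atTop atBot := by
      apply Tendsto.const_mul_atTop_of_neg (by linarith : -r < 0) tendsto_id
    have h2 : Tendsto (fun x : ℝ => Real.exp (-r * x)) atTop (nhds 0) :=
      Real.tendsto_exp_atBot.comp h1
    have h3 : Tendsto (fun x => w x - v x) atTop (nhds 0) := by
      have := hwlim.sub hvlim
      rwa [sub_zero] at this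
    have h4 := h2.mul h3
    rwa [zero_mul] at h4
  have hGnonneg : ∀ x ∈ Ici (0:ℝ), 0 ≤ G x := by
    intro x hx
    apply le_of_tendsto hGlim
    filter_upwards [eventually_gt_atTop x] with y hy
    exact (hGanti hx (le_trans hx (le_of_lt hy)) hy).le
  have hGpos : ∀ x ∈ Ici (0:ℝ), 0 < G x := by
    intro x hx
    have h1 : G (x + 1) < G x := hGanti hx (by simp at hx ⊢; linarith) (by linarith)
    have h2 : 0 ≤ G (x + 1) := hGnonneg (x + 1) (by simp at hx ⊢; linarith)
    linarith
  intro x hx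
  have h1 := hGpos x hx
  rw [hG_def] at h1
  simp only at h1
  have he := Real.exp_pos (-r * x)
  nlinarith
end

section
/- Under the setup of Corollary A.2, the function g(b) := V_b''(b) is given explicitly by g(b) = 2μ/σ² + 2(λ+δ)/(σ²A) + (2λ/σ²)((2(λ+δ)/(Aσ²))∫_0^∞ U(z+b)e^{−zÃ}dz − U(b)), and g is monotonically increasing in b. -/
open Filter Set MeasureTheory

lemma aux_deriv_ge_one {f f' : ℝ → ℝ} {x₀ : ℝ}
    (hf : ∀ x ≥ x₀, HasDerivAt f (f' x) x)
    (h1 : ∀ x ≥ x₀, 1 ≤ f' x)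
    (hlim : Tendsto f atTop (nhds 0)) : False := by
  have hmono : MonotoneOn (fun x => f x - x) (Ici x₀) := by
    apply monotoneOn_of_deriv_nonneg (convex_Ici x₀)
    · intro x hx
      exact ((hf x hx).sub (hasDerivAt_id' x)).continuousAt.continuousWithinAt
    · intro x hx
      rw [interior_Ici] at hx
      exact ((hf x hx.le).sub (hasDerivAt_id' x)).differentiableAt.differentiableWithinAt
    · intro x hx
      rw [interior_Ici] at hx
      rw [show (fun x => f x - x) = (f - fun x => x) from rfl, ((hf x hx.le).sub (hasDerivAt_id' x)).deriv]
      linarith [h1 x hx.le]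
  have h2 : ∀ᶠ x in atTop, f x < 1 := hlim.eventually_lt_const one_pos
  have h3 : ∀ᶠ x in atTop, max x₀ (x₀ - f x₀ + 1) ≤ x := eventually_ge_atTop _
  obtain ⟨x, hx1, hx2⟩ := (h2.and h3).exists
  have hxx : x₀ ≤ x := le_trans (le_max_left _ _) hx2
  have hm := hmono self_mem_Ici (mem_Ici.2 hxx) hxx
  have hx3 : x₀ - f x₀ + 1 ≤ x := le_trans (le_max_right _ _) hx2
  simp only at hm
  linarith

lemma aux_intOn {f : ℝ → ℝ} {a At M : ℝ} (hAt : 0 < At)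
    (hcont : ContinuousOn f (Ici a))
    (hM : ∀ x ∈ Ici a, |f x| ≤ M) :
    IntegrableOn (fun x => f x * Real.exp (-x * At)) (Ioi a) := by
  have hint : IntegrableOn (fun x => M * Real.exp (-At * x)) (Ioi a) :=
    (exp_neg_integrableOn_Ioi a hAt).const_mul M
  refine MeasureTheory.Integrable.mono hint ?_ ?_
  · apply ContinuousOn.aestronglyMeasurable _ measurableSet_Ioi
    apply ContinuousOn.mul (hcont.mono Ioi_subset_Ici_self)
    exact (Real.continuous_exp.comp ((continuous_id.neg).mul continuous_const)).continuousOn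
  · filter_upwards [ae_restrict_mem measurableSet_Ioi] with x hx
    have hx' : x ∈ Ici a := mem_Ici.2 (le_of_lt (mem_Ioi.1 hx))
    have h1 : |f x| ≤ M := hM x hx'
    have hM0 : 0 ≤ M := le_trans (abs_nonneg _) h1
    have he : (0:ℝ) < Real.exp (-x * At) := Real.exp_pos _
    rw [Real.norm_eq_abs, Real.norm_eq_abs, abs_mul, abs_mul, abs_of_pos he,
      abs_of_nonneg hM0, abs_of_pos (Real.exp_pos _), show -At * x = -x * At by ring]
    exact mul_le_mul_of_nonneg_right h1 he.le

lemma aux_convex {U : ℝ → ℝ} (h : ConvexOn ℝ (Ici (0:ℝ)) U)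
    {a s z : ℝ} (ha : 0 ≤ a) (hs : 0 ≤ s) (hz : 0 ≤ z) :
    U (a + s) + U (a + z) ≤ U a + U (a + s + z) := by
  rcases eq_or_lt_of_le (add_nonneg hs hz) with hsz | hsz
  · have hs0 : s = 0 := by linarith
    have hz0 : z = 0 := by linarith
    simp [hs0, hz0]
  · have hne : s + z ≠ 0 := ne_of_gt hsz
    have hmem1 : a ∈ Ici (0:ℝ) := ha
    have hmem2 : a + s + z ∈ Ici (0:ℝ) := by
      simp only [mem_Ici]; linarith
    have ht0 : 0 ≤ z / (s + z) := div_nonneg hz hsz.le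
    have h1t : 0 ≤ 1 - z / (s + z) := by
      rw [sub_nonneg, div_le_one hsz]; linarith
    have hadd : z / (s + z) + (1 - z / (s + z)) = 1 := by ring
    have hadd2 : (1 - z / (s + z)) + z / (s + z) = 1 := by ring
    have i1 := h.2 hmem1 hmem2 ht0 h1t hadd
    have i2 := h.2 hmem1 hmem2 h1t ht0 hadd2
    simp only [smul_eq_mul] at i1 i2
    have e1 : z / (s + z) * a + (1 - z / (s + z)) * (a + s + z) = a + s := by
      field_simp; ring
    have e2 : (1 - z / (s + z)) * a + z / (s + z) * (a + s + z) = a + z := by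
      field_simp; ring
    rw [e1] at i1
    rw [e2] at i2
    linarith

set_option maxHeartbeats 2000000 in
theorem barrier_second_derivative_increasing
    (σ μ lam δ : ℝ) (hσ : 0 < σ) (hμ : 0 < μ) (hlam : 0 < lam) (hδ : -lam < δ)
    (U : ℝ → ℝ)
    (hUpos : ∀ x ∈ Ici (0 : ℝ), 0 ≤ U x)
    (hUconv : ConvexOn ℝ (Ici (0 : ℝ)) U)
    (hUdec : AntitoneOn U (Ici (0 : ℝ)))
    (hUC2 : ContDiffOn ℝ 2 U (Ici (0 : ℝ)))
    (hUlim : Tendsto U atTop (nhds 0))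
    (ψ A At : ℝ)
    (hψ : ψ = Real.sqrt (μ ^ 2 + 2 * σ ^ 2 * (δ + lam)))
    (hA : A = (μ + ψ) / σ ^ 2)
    (hAt : At = (-μ + ψ) / σ ^ 2)
    (V V' V'' : ℝ → ℝ → ℝ)
    (hd1 : ∀ b ∈ Ici (0 : ℝ), ∀ x ∈ Ici (0 : ℝ), HasDerivAt (V b) (V' b x) x)
    (hd2 : ∀ b ∈ Ici (0 : ℝ), ∀ x ∈ Ici (0 : ℝ), HasDerivAt (V' b) (V'' b x) x)
    (hcont : ∀ b ∈ Ici (0 : ℝ), ContinuousOn (V'' b) (Ici (0 : ℝ)))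
    (hODE : ∀ b ∈ Ici (0 : ℝ), ∀ x ∈ Ici (0 : ℝ),
      σ ^ 2 / 2 * V'' b x + μ * V' b x - (lam + δ) * V b x + lam * U x = 0)
    (hVb : ∀ b ∈ Ici (0 : ℝ), V' b b = -1)
    (hVlim : ∀ b ∈ Ici (0 : ℝ), Tendsto (V b) atTop (nhds 0)) :
    (∀ b ∈ Ici (0 : ℝ),
      V'' b b = 2 * μ / σ ^ 2 + 2 * (lam + δ) / (σ ^ 2 * A)
        + (2 * lam / σ ^ 2) * ((2 * (lam + δ) / (A * σ ^ 2)) *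
            (∫ z in Ioi (0 : ℝ), U (z + b) * Real.exp (-z * At)) - U b)) ∧
    MonotoneOn (fun b => V'' b b) (Ici (0 : ℝ)) := by
  have hσ2 : (0:ℝ) < σ ^ 2 := by positivity
  have hσne : σ ≠ 0 := ne_of_gt hσ
  have hld : 0 < lam + δ := by linarith
  have harg : 0 < μ ^ 2 + 2 * σ ^ 2 * (δ + lam) := by nlinarith
  have hψ2 : ψ ^ 2 = μ ^ 2 + 2 * σ ^ 2 * (δ + lam) := by
    rw [hψ, Real.sq_sqrt harg.le]
  have hψpos : 0 < ψ := hψ ▸ Real.sqrt_pos.2 harg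
  have hψμ : μ < ψ := by nlinarith
  have hApos : 0 < A := by
    rw [hA]; exact div_pos (by linarith) hσ2
  have hAtpos : 0 < At := by
    rw [hAt]; exact div_pos (by linarith) hσ2
  have hAne : A ≠ 0 := ne_of_gt hApos
  have hAtne : At ≠ 0 := ne_of_gt hAtpos
  have hAmul : A * At * σ ^ 2 = 2 * (lam + δ) := by
    rw [hA, hAt]
    field_simp
    linear_combination hψ2
  have hAmul2 : A * At = 2 * (lam + δ) / σ ^ 2 := by
    rw [eq_div_iff (ne_of_gt hσ2)]; exact hAmul
  have hAsub : A - At = 2 * μ / σ ^ 2 := by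
    rw [hA, hAt]; field_simp; ring
  have hinvσ : σ ^ 2 * σ⁻¹ ^ 2 = 1 := by field_simp
  have hinvA : A * A⁻¹ = 1 := mul_inv_cancel₀ hAne
  have hUcont : ContinuousOn U (Ici (0:ℝ)) := hUC2.continuousOn
  have hUbd : ∀ x ∈ Ici (0:ℝ), |U x| ≤ U 0 := by
    intro x hx
    rw [abs_of_nonneg (hUpos x hx)]
    exact hUdec self_mem_Ici hx hx
  -- integrability of the J-integrand
  have hJint : ∀ b ∈ Ici (0:ℝ),
      IntegrableOn (fun z => U (z + b) * Real.exp (-z * At)) (Ioi 0) := by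
    intro b hb
    have hc : ContinuousOn (fun z => U (z + b)) (Ici 0) := by
      apply hUcont.comp (continuous_id.add continuous_const).continuousOn
      intro z hz
      exact mem_Ici.2 (add_nonneg (mem_Ici.1 hz) (mem_Ici.1 hb))
    exact aux_intOn hAtpos hc (fun x hx => hUbd (x + b) (mem_Ici.2 (add_nonneg (mem_Ici.1 hx) (mem_Ici.1 hb))))
  -- integrability of exp (-z * At) over Ioi 0
  have hIeint : IntegrableOn (fun z : ℝ => Real.exp (-z * At)) (Ioi 0) := by
    have := exp_neg_integrableOn_Ioi 0 hAtpos
    apply this.congr_fun _ measurableSet_Ioi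
    intro z _
    exact congrArg Real.exp (by ring)
  -- value of the exponential integral
  have hIe : ∫ z in Ioi (0:ℝ), Real.exp (-z * At) = 1 / At := by
    have hderiv : ∀ x ∈ Ici (0:ℝ),
        HasDerivAt (fun z => -(1/At) * Real.exp (-z * At)) (Real.exp (-x * At)) x := by
      intro x _
      have h1 : HasDerivAt (fun y : ℝ => -y * At) (-At) x := by
        simpa using ((hasDerivAt_id' x).neg.mul_const At)
      have h2 := (h1.exp).const_mul (-(1/At))
      refine h2.congr_deriv ?_
      field_simp
    have hexpz : Tendsto (fun z : ℝ => Real.exp (-z * At)) atTop (nhds 0) := by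
      have h3 : Tendsto (fun z : ℝ => z * At) atTop atTop :=
        Tendsto.atTop_mul_const hAtpos tendsto_id
      have h4 := Real.tendsto_exp_neg_atTop_nhds_zero.comp h3
      exact h4.congr (fun z => congrArg Real.exp (by ring))
    have hlim : Tendsto (fun z : ℝ => -(1/At) * Real.exp (-z * At)) atTop (nhds 0) := by
      rw [show (0:ℝ) = -(1/At) * 0 by ring]
      exact hexpz.const_mul (-(1/At))
    have := integral_Ioi_of_hasDerivAt_of_tendsto' hderiv hIeint hlim
    rw [this]
    simp [Real.exp_zero]
  -- the key boundary identity
  have key : ∀ b ∈ Ici (0:ℝ), -1 + A * V b b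
      = (2 * lam / σ ^ 2) * ∫ z in Ioi (0:ℝ), U (z + b) * Real.exp (-z * At) := by
    intro b hb
    set Jb := ∫ z in Ioi (0:ℝ), U (z + b) * Real.exp (-z * At) with hJb
    set F : ℝ → ℝ := fun y => (V' b y + A * V b y) * Real.exp (-y * At) with hF
    set G : ℝ → ℝ := fun t => (2 * lam / σ ^ 2) * (U t * Real.exp (-t * At)) with hG
    have hFd : ∀ x ∈ Ici (0:ℝ), HasDerivAt F (-G x) x := by
      intro x hx
      have hW : HasDerivAt (fun y => V' b y + A * V b y) (V'' b x + A * V' b x) x :=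
        (hd2 b hb x hx).add ((hd1 b hb x hx).const_mul A)
      have h1 : HasDerivAt (fun y : ℝ => -y * At) (-At) x := by
        simpa using ((hasDerivAt_id' x).neg.mul_const At)
      have hE : HasDerivAt (fun y : ℝ => Real.exp (-y * At)) (-At * Real.exp (-x * At)) x := by
        simpa [mul_comm] using h1.exp
      have h2 := hW.mul hE
      simp only [hF, hG]
      refine h2.congr_deriv ?_
      symm
      have hode := hODE b hb x hx
      linear_combination (-(2/σ^2) * Real.exp (-x * At)) * hode
        - (V' b x * Real.exp (-x * At)) * hAsub
        + (V b x * Real.exp (-x * At)) * hAmul2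
        + (Real.exp (-x * At) * V'' b x) * hinvσ
    have hGcont : ContinuousOn G (Ici (0:ℝ)) := by
      simp only [hG]
      apply continuousOn_const.mul
      apply hUcont.mul
      exact (Real.continuous_exp.comp ((continuous_id.neg).mul continuous_const)).continuousOn
    have hGint : IntegrableOn G (Ioi b) := by
      have hc2 : ContinuousOn (fun t => (2 * lam / σ ^ 2) * U t) (Ici b) :=
        (continuousOn_const.mul hUcont).mono (Ici_subset_Ici.2 hb)
      have := aux_intOn (M := (2 * lam / σ ^ 2) * U 0) hAtpos hc2 ?_
      · apply this.congr_fun _ measurableSet_Ioi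
        intro t _
        simp only [hG]; ring
      · intro x hx
        rw [abs_mul, abs_of_nonneg (by positivity : (0:ℝ) ≤ 2 * lam / σ ^ 2)]
        apply mul_le_mul_of_nonneg_left _ (by positivity)
        exact hUbd x (mem_Ici.2 (le_trans (mem_Ici.1 hb) (mem_Ici.1 hx)))
    have hFTC : ∀ x, b ≤ x → (∫ t in b..x, -G t) = F x - F b := by
      intro x hx
      apply intervalIntegral.integral_eq_sub_of_hasDerivAt
      · intro t ht
        rw [uIcc_of_le hx] at ht
        exact hFd t (le_trans hb ht.1)
      · apply ContinuousOn.intervalIntegrable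
        apply (hGcont.neg).mono
        rw [uIcc_of_le hx]
        intro t ht
        exact le_trans hb ht.1
    have hlim1 : Tendsto (fun x => ∫ t in b..x, G t) atTop (nhds (∫ t in Ioi b, G t)) :=
      intervalIntegral_tendsto_integral_Ioi b hGint tendsto_id
    have hlim2 : Tendsto (fun x => ∫ t in b..x, G t) atTop
        (nhds ((2 * lam / σ ^ 2) * Real.exp (-b * At) * Jb)) := by
      have h1 : Tendsto (fun x : ℝ => x - b) atTop atTop := by
        simpa [sub_eq_add_neg] using
          tendsto_atTop_add_const_right atTop (-b) (tendsto_id (α := ℝ))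
      have h2 := intervalIntegral_tendsto_integral_Ioi (0:ℝ) (hJint b hb) h1
      have h3 := h2.const_mul ((2 * lam / σ ^ 2) * Real.exp (-b * At))
      rw [show (2 * lam / σ ^ 2) * Real.exp (-b * At) * Jb
        = (2 * lam / σ ^ 2) * Real.exp (-b * At) * Jb from rfl]
      apply h3.congr
      intro x
      rw [← intervalIntegral.integral_const_mul]
      have h0 := intervalIntegral.integral_comp_add_right (a := 0) (b := x - b) G b
      simp only [zero_add, sub_add_cancel] at h0
      rw [← h0]
      apply intervalIntegral.integral_congr
      intro z _
      simp only [hG]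
      rw [show -(z + b) * At = -z * At + -b * At by ring, Real.exp_add]
      ring
    have hIval : (∫ t in Ioi b, G t) = (2 * lam / σ ^ 2) * Real.exp (-b * At) * Jb :=
      tendsto_nhds_unique hlim1 hlim2
    have hFlim : Tendsto F atTop (nhds (F b - ∫ t in Ioi b, G t)) := by
      have h1 : Tendsto (fun x => F b - ∫ t in b..x, G t) atTop
          (nhds (F b - ∫ t in Ioi b, G t)) := tendsto_const_nhds.sub hlim1
      apply h1.congr'
      filter_upwards [eventually_ge_atTop b] with x hx
      have h2 := hFTC x hx
      rw [intervalIntegral.integral_neg] at h2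
      linarith
    have hVlim' := hVlim b hb
    have hFW : ∀ x : ℝ, V' b x = F x * Real.exp (x * At) - A * V b x := by
      intro x
      have he : Real.exp (-x * At) * Real.exp (x * At) = 1 := by
        rw [← Real.exp_add]
        norm_num
      simp only [hF]
      rw [mul_assoc, he]
      ring
    have hL : F b - (∫ t in Ioi b, G t) = 0 := by
      set L := F b - ∫ t in Ioi b, G t with hLdef
      by_contra hne
      have hsmall : ∀ᶠ x in atTop, |A * V b x| < 1 := by
        have habs : Tendsto (fun x => |A * V b x|) atTop (nhds 0) := by
          have := (hVlim'.const_mul A).abs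
          simpa using this
        exact habs.eventually_lt_const one_pos
      have hexpTop : Tendsto (fun x : ℝ => Real.exp (x * At)) atTop atTop :=
        Real.tendsto_exp_atTop.comp (Tendsto.atTop_mul_const hAtpos tendsto_id)
      rcases lt_or_gt_of_ne hne with hneg | hpos
      · -- L < 0 : eventually V' b x ≤ -1
        have hF2 : ∀ᶠ x in atTop, F x < L / 2 := hFlim.eventually_lt_const (by linarith)
        have hexp3 : ∀ᶠ x in atTop, -4 / L ≤ Real.exp (x * At) :=
          hexpTop.eventually (eventually_ge_atTop _)
        have hev : ∀ᶠ x in atTop, 1 ≤ -V' b x := by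
          filter_upwards [hF2, hsmall, hexp3] with x h1 h2 h3
          have he := (Real.exp_pos (x * At)).le
          have hs1 : F x * Real.exp (x * At) ≤ L / 2 * Real.exp (x * At) :=
            mul_le_mul_of_nonneg_right h1.le he
          have hs2 : L / 2 * Real.exp (x * At) ≤ L / 2 * (-4 / L) :=
            mul_le_mul_of_nonpos_left h3 (by linarith)
          have hval : L / 2 * (-4 / L) = -2 := by
            field_simp; ring
          have habs2 := (abs_lt.1 h2).1
          have hfw := hFW x
          linarith
        obtain ⟨x₀, hx₀⟩ := eventually_atTop.1 (hev.and (eventually_ge_atTop (0:ℝ)))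
        have hx₀0 : (0:ℝ) ≤ x₀ := (hx₀ x₀ le_rfl).2
        exact aux_deriv_ge_one (f := fun x => -V b x) (f' := fun x => -V' b x)
          (fun x hx => (hd1 b hb x (le_trans hx₀0 hx)).neg)
          (fun x hx => (hx₀ x hx).1)
          (by simpa using hVlim'.neg)
      · -- L > 0 : eventually V' b x ≥ 1
        have hF2 : ∀ᶠ x in atTop, L / 2 < F x := hFlim.eventually_const_lt (by linarith)
        have hexp3 : ∀ᶠ x in atTop, 4 / L ≤ Real.exp (x * At) :=
          hexpTop.eventually (eventually_ge_atTop _)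
        have hev : ∀ᶠ x in atTop, 1 ≤ V' b x := by
          filter_upwards [hF2, hsmall, hexp3] with x h1 h2 h3
          have he := (Real.exp_pos (x * At)).le
          have hs1 : L / 2 * Real.exp (x * At) ≤ F x * Real.exp (x * At) :=
            mul_le_mul_of_nonneg_right h1.le he
          have hs2 : L / 2 * (4 / L) ≤ L / 2 * Real.exp (x * At) :=
            mul_le_mul_of_nonneg_left h3 (by linarith)
          have hval : L / 2 * (4 / L) = 2 := by
            field_simp; ring
          have habs2 := (abs_lt.1 h2).2
          have hfw := hFW x
          linarith
        obtain ⟨x₀, hx₀⟩ := eventually_atTop.1 (hev.and (eventually_ge_atTop (0:ℝ)))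
        have hx₀0 : (0:ℝ) ≤ x₀ := (hx₀ x₀ le_rfl).2
        exact aux_deriv_ge_one (f := V b) (f' := V' b)
          (fun x hx => hd1 b hb x (le_trans hx₀0 hx))
          (fun x hx => (hx₀ x hx).1)
          hVlim'
    have hFb : F b = (2 * lam / σ ^ 2) * Real.exp (-b * At) * Jb := by
      rw [hIval] at hL
      linarith
    have h1 : F b = (-1 + A * V b b) * Real.exp (-b * At) := by
      simp only [hF]
      rw [hVb b hb]
    have hexp0 : Real.exp (-b * At) ≠ 0 := (Real.exp_pos _).ne'
    apply mul_right_cancel₀ hexp0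
    rw [← h1, hFb]
    ring
  -- the explicit formula
  have hform : ∀ b ∈ Ici (0:ℝ),
      V'' b b = 2 * μ / σ ^ 2 + 2 * (lam + δ) / (σ ^ 2 * A)
        + (2 * lam / σ ^ 2) * ((2 * (lam + δ) / (A * σ ^ 2)) *
            (∫ z in Ioi (0 : ℝ), U (z + b) * Real.exp (-z * At)) - U b) := by
    intro b hb
    have hk := key b hb
    have hode := hODE b hb b hb
    rw [hVb b hb] at hode
    linear_combination (2 / σ ^ 2) * hode + (2 * (lam + δ) / (σ ^ 2 * A)) * hk
      - V'' b b * hinvσ - (2 * (lam + δ) * V b b / σ ^ 2) * hinvA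
  refine ⟨hform, ?_⟩
  -- monotonicity
  have hkAt : 2 * (lam + δ) / (A * σ ^ 2) = At := by
    rw [eq_comm, eq_div_iff (mul_ne_zero hAne (ne_of_gt hσ2))]
    linear_combination hAmul
  intro b1 hb1 b2 hb2 hle
  simp only
  rw [hform b1 hb1, hform b2 hb2, hkAt]
  set J1 := ∫ z in Ioi (0:ℝ), U (z + b1) * Real.exp (-z * At) with hJ1
  set J2 := ∫ z in Ioi (0:ℝ), U (z + b2) * Real.exp (-z * At) with hJ2
  have hptwise : ∀ z ∈ Ioi (0:ℝ),
      U (z + b1) * Real.exp (-z * At) + (U b2 - U b1) * Real.exp (-z * At)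
        ≤ U (z + b2) * Real.exp (-z * At) := by
    intro z hz
    have hz0 : (0:ℝ) ≤ z := le_of_lt hz
    have hcv := aux_convex hUconv hb1 (sub_nonneg.2 hle) hz0
    have e1 : b1 + (b2 - b1) = b2 := by ring
    have e2 : b1 + z = z + b1 := by ring
    have e3 : b1 + (b2 - b1) + z = z + b2 := by ring
    rw [e3, e1, e2] at hcv
    have h1 : U (z + b1) + (U b2 - U b1) ≤ U (z + b2) := by linarith
    have hexp : (0:ℝ) ≤ Real.exp (-z * At) := (Real.exp_pos _).le
    nlinarith [mul_le_mul_of_nonneg_right h1 hexp]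
  have hint1 : IntegrableOn
      (fun z => U (z + b1) * Real.exp (-z * At) + (U b2 - U b1) * Real.exp (-z * At))
      (Ioi (0:ℝ)) :=
    (hJint b1 hb1).add (hIeint.const_mul (U b2 - U b1))
  have hIneq := setIntegral_mono_on hint1 (hJint b2 hb2) measurableSet_Ioi hptwise
  rw [integral_add (hJint b1 hb1) (hIeint.const_mul (U b2 - U b1)),
    integral_const_mul, hIe] at hIneq
  -- hIneq : J1 + (U b2 - U b1) * (1/At) ≤ J2
  have h6 : At * (J1 + (U b2 - U b1) * (1 / At)) = At * J1 + (U b2 - U b1) := by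
    field_simp
  have h5 := mul_le_mul_of_nonneg_left hIneq hAtpos.le
  have key2 : At * J1 + (U b2 - U b1) ≤ At * J2 := by
    rw [← h6]
    exact h5
  have hc : (0:ℝ) ≤ 2 * lam / σ ^ 2 := by positivity
  have hinner : At * J1 - U b1 ≤ At * J2 - U b2 := by linarith
  have := mul_le_mul_of_nonneg_left hinner hc
  linarith
end
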